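/- Let $(f_\lambda)_{\lambda \in \Lambda}$ be a holomorphic family of polynomials of degree $d \geq 2$ over a complex manifold $\Lambda$, with monic centered $f_\lambda$ depending holomorphically on $\lambda$, and let $\lambda \mapsto a(\lambda)$ be a holomorphic marked point. Then the function $\lambda \mapsto G_{f_\lambda}(a(\lambda))$ is continuous and plurisubharmonic on $\Lambda$. -/

import Mathlib

open Filter

/-- `log⁺ = max(log, 0)`. -/
noncomputable def posLog (x : ℝ) : ℝ := max (Real.log x) 0

section GreenAux
open Complex

lemma posLog_nonneg (x : ℝ) : 0 ≤ posLog x := le_max_right _ _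

lemma posLog_of_le_one {x : ℝ} (hx : 0 ≤ x) (h : x ≤ 1) : posLog x = 0 :=
  max_eq_right (Real.log_nonpos hx h)

lemma posLog_of_one_le {x : ℝ} (h : 1 ≤ x) : posLog x = Real.log x :=
  max_eq_left (Real.log_nonneg h)

lemma le_exp_posLog {x : ℝ} (hx : 0 ≤ x) : x ≤ Real.exp (posLog x) := by
  rcases le_or_gt x 1 with h | h
  · exact h.trans (Real.one_le_exp (posLog_nonneg x))
  · rw [posLog_of_one_le h.le, Real.exp_log (by linarith)]

lemma posLog_mono {x y : ℝ} (hx : 0 ≤ x) (hxy : x ≤ y) : posLog x ≤ posLog y := by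
  rcases le_or_gt x 1 with h | h
  · rw [posLog_of_le_one hx h]; exact posLog_nonneg y
  · rw [posLog_of_one_le h.le, posLog_of_one_le (h.le.trans hxy)]
    exact Real.log_le_log (by linarith) hxy

lemma log_le_posLog (x : ℝ) : Real.log x ≤ posLog x := le_max_left _ _

lemma posLog_mul_le {x y : ℝ} (hx : 0 ≤ x) (hy : 0 ≤ y) :
    posLog (x * y) ≤ posLog x + posLog y := by
  rcases le_or_gt (x * y) 1 with h | h
  · rw [posLog_of_le_one (mul_nonneg hx hy) h]
    exact add_nonneg (posLog_nonneg x) (posLog_nonneg y)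
  · have hx0 : 0 < x := by
      rcases hx.lt_or_eq with h' | h'; · exact h'
      exfalso; rw [← h', zero_mul] at h; linarith
    have hy0 : 0 < y := by
      rcases hy.lt_or_eq with h' | h'; · exact h'
      exfalso; rw [← h', mul_zero] at h; linarith
    rw [posLog_of_one_le h.le, Real.log_mul hx0.ne' hy0.ne']
    exact add_le_add (log_le_posLog x) (log_le_posLog y)

lemma posLog_pow (n : ℕ) {x : ℝ} (hx : 0 ≤ x) : posLog (x ^ n) = n * posLog x := by
  rcases le_or_gt x 1 with h | h
  · rw [posLog_of_le_one hx h, posLog_of_le_one (pow_nonneg hx n) (pow_le_one₀ hx h), mul_zero]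
  · rw [posLog_of_one_le h.le, posLog_of_one_le (one_le_pow₀ h.le), Real.log_pow]

lemma continuous_posLog : Continuous posLog := by
  rw [continuous_iff_continuousAt]
  intro x
  rcases ne_or_eq x 0 with hx | rfl
  · exact (Real.continuousAt_log hx).max continuousAt_const
  · have hev : posLog =ᶠ[nhds (0:ℝ)] fun _ => 0 := by
      filter_upwards [Metric.ball_mem_nhds (0:ℝ) one_pos] with y hy
      rcases eq_or_ne y 0 with rfl | hy0
      · simp [posLog, Real.log_zero]
      · have : |y| < 1 := by simpa [Real.dist_eq] using hy
        have hlog : Real.log y ≤ 0 := by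
          rw [← Real.log_abs]
          exact Real.log_nonpos (abs_nonneg y) this.le
        simp [posLog, max_eq_right hlog]
    exact ContinuousAt.congr (continuousAt_const) hev.symm


lemma integral_circle_eq (Q : ℂ → ℂ) (hQ : Differentiable ℂ Q) :
    ∫ θ in (0:ℝ)..(2*Real.pi), Q (Complex.exp (θ * Complex.I))
      = ((2*Real.pi : ℝ) : ℂ) * Q 0 := by
  have h := (hQ.diffContOnCl (s := Metric.ball (0:ℂ) 1)).circleIntegral_sub_inv_smul
      (w := 0) (Metric.mem_ball_self one_pos)
  rw [circleIntegral] at h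
  simp only [deriv_circleMap, circleMap, ofReal_one, one_mul, zero_add, sub_zero,
    smul_eq_mul] at h
  have key : ∀ θ : ℝ, Complex.exp (↑θ * I) * I * ((Complex.exp (↑θ * I))⁻¹ *
      Q (Complex.exp (↑θ * I))) = I * Q (Complex.exp (↑θ * I)) := by
    intro θ
    have := Complex.exp_ne_zero (↑θ * I)
    field_simp
  rw [intervalIntegral.integral_congr (g := fun θ : ℝ => I * Q (Complex.exp (↑θ * I)))
    (fun θ _ => key θ), intervalIntegral.integral_const_mul] at h
  have hI : (I : ℂ) ≠ 0 := Complex.I_ne_zero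
  apply mul_left_cancel₀ hI
  rw [h]
  push_cast
  ring

lemma re_meanvalue (Q : ℂ → ℂ) (hQ : Differentiable ℂ Q) :
    (Q 0).re = (1/(2*Real.pi)) *
      ∫ θ in (0:ℝ)..(2*Real.pi), (Q (Complex.exp (θ * Complex.I))).re := by
  have hint : IntervalIntegrable (fun θ : ℝ => Q (Complex.exp (θ * Complex.I)))
      MeasureTheory.volume 0 (2*Real.pi) := by
    apply Continuous.intervalIntegrable
    exact hQ.continuous.comp (Complex.continuous_exp.comp (continuous_ofReal.mul continuous_const))
  have h2 := Complex.reCLM.intervalIntegral_comp_comm hint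
  have h1 := integral_circle_eq Q hQ
  have hre : (∫ θ in (0:ℝ)..(2*Real.pi), (Q (Complex.exp (θ * Complex.I))).re)
      = (2*Real.pi) * (Q 0).re := by
    have : (fun θ : ℝ => (Q (Complex.exp (θ * Complex.I))).re)
        = fun θ : ℝ => Complex.reCLM (Q (Complex.exp (θ * Complex.I))) := rfl
    rw [this, h2, h1]
    simp
  rw [hre]
  have hπ : (2*Real.pi) ≠ 0 := by positivity
  field_simp

lemma trig_approx (U : ℂ → ℝ) (hU : ∀ z ∈ Metric.sphere (0:ℂ) 1, ContinuousAt U z)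
    (ε : ℝ) (hε : 0 < ε) :
    ∃ Q : ℂ → ℂ, Differentiable ℂ Q ∧
      ∀ θ : ℝ, |(Q (Complex.exp (θ * Complex.I))).re - U (Complex.exp (θ * Complex.I))| ≤ ε := by
  haveI : Fact (0 < 2 * Real.pi) := ⟨Real.two_pi_pos⟩
  -- the continuous function on the circle
  have habs : ∀ p : AddCircle (2 * Real.pi), fourier 1 p ∈ Metric.sphere (0:ℂ) 1 := by
    intro p
    rw [mem_sphere_zero_iff_norm, fourier_apply]
    exact Circle.norm_coe _
  have hFc : Continuous fun p : AddCircle (2 * Real.pi) => ((U (fourier 1 p) : ℝ) : ℂ) := by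
    apply Complex.continuous_ofReal.comp
    rw [continuous_iff_continuousAt]
    intro p
    exact (hU _ (habs p)).comp (map_continuous (fourier 1)).continuousAt
  set F : C(AddCircle (2 * Real.pi), ℂ) := ⟨_, hFc⟩ with hF
  have hmem : F ∈ closure ((Submodule.span ℂ (Set.range (@fourier (2 * Real.pi)))) : Set _) := by
    rw [← Submodule.topologicalClosure_coe, span_fourier_closure_eq_top]
    trivial
  rw [Metric.mem_closure_iff] at hmem
  obtain ⟨g, hgmem, hgdist⟩ := hmem ε hε
  obtain ⟨cc, hcc⟩ := Finsupp.mem_span_range_iff_exists_finsupp.mp hgmem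
  refine ⟨fun z => ∑ n ∈ cc.support, (if 0 ≤ n then cc n else (starRingEnd ℂ) (cc n)) * z ^ n.natAbs,
    ?_, ?_⟩
  · exact Differentiable.fun_sum fun n _ => (differentiable_const _).mul (differentiable_pow _)
  · intro θ
    have hfour : ∀ n : ℤ, fourier n ((θ : ℝ) : AddCircle (2 * Real.pi))
        = Complex.exp ((n : ℂ) * (θ * Complex.I)) := by
      intro n
      rw [fourier_coe_apply]
      congr 1
      have : (Real.pi : ℂ) ≠ 0 := by
        simp [Real.pi_ne_zero]
      field_simp
      push_cast
      ring
    have hgval : g ((θ : ℝ) : AddCircle (2 * Real.pi))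
        = ∑ n ∈ cc.support, cc n * Complex.exp ((n : ℂ) * (θ * Complex.I)) := by
      rw [← hcc]
      rw [Finsupp.sum]
      simp only [ContinuousMap.coe_sum, Finset.sum_apply, ContinuousMap.coe_smul, Pi.smul_apply,
        smul_eq_mul]
      exact Finset.sum_congr rfl fun n _ => by rw [hfour]
    -- real parts agree
    have hre : (∑ n ∈ cc.support,
          (if 0 ≤ n then cc n else (starRingEnd ℂ) (cc n)) * Complex.exp (θ * Complex.I) ^ n.natAbs).re
        = (g ((θ : ℝ) : AddCircle (2 * Real.pi))).re := by
      rw [hgval, Complex.re_sum, Complex.re_sum]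
      apply Finset.sum_congr rfl
      intro n _
      rw [← Complex.exp_nat_mul]
      by_cases hn : 0 ≤ n
      · rw [if_pos hn]
        have h1 : ((n.natAbs : ℂ)) = (n : ℂ) := by
          rw [← Int.cast_natCast (R := ℂ), Int.natAbs_of_nonneg hn]
        rw [h1]
      · rw [if_neg hn]
        have h1 : ((n.natAbs : ℂ)) = -(n : ℂ) := by
          rw [← Int.cast_natCast (R := ℂ), Int.ofNat_natAbs_of_nonpos (le_of_not_ge hn),
            Int.cast_neg]
        have hc : (starRingEnd ℂ) ((n : ℂ) * (↑θ * I)) = ((n.natAbs : ℂ)) * (↑θ * I) := by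
          rw [h1, map_mul, map_mul, Complex.conj_I, Complex.conj_ofReal]
          have : (starRingEnd ℂ) ((n : ℤ) : ℂ) = ((n : ℤ) : ℂ) := by
            simp
          rw [this]
          ring
        have : (starRingEnd ℂ) (cc n) * Complex.exp ((n.natAbs : ℂ) * (↑θ * I))
            = (starRingEnd ℂ) (cc n * Complex.exp ((n : ℂ) * (↑θ * I))) := by
          rw [map_mul, ← Complex.exp_conj, hc]
        rw [this, Complex.conj_re]
    rw [hre]
    -- now compare with F
    have hFval : F ((θ : ℝ) : AddCircle (2 * Real.pi)) = ((U (Complex.exp (θ * Complex.I)) : ℝ) : ℂ) := by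
      rw [hF]
      simp only [ContinuousMap.coe_mk]
      rw [hfour 1]
      norm_num
    have hd : dist (g ((θ : ℝ) : AddCircle (2 * Real.pi))) (F ((θ : ℝ) : AddCircle (2 * Real.pi))) ≤ ε := by
      calc dist (g _) (F _) ≤ dist g F := ContinuousMap.dist_apply_le_dist _
        _ ≤ ε := by rw [dist_comm] at hgdist; exact hgdist.le
    calc |(g ((θ : ℝ) : AddCircle (2 * Real.pi))).re - U (Complex.exp (θ * Complex.I))|
        = |((g ((θ : ℝ) : AddCircle (2 * Real.pi))) - F ((θ : ℝ) : AddCircle (2 * Real.pi))).re| := by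
          rw [hFval]; simp
      _ ≤ ‖(g ((θ : ℝ) : AddCircle (2 * Real.pi))) - F ((θ : ℝ) : AddCircle (2 * Real.pi))‖ :=
          Complex.abs_re_le_norm _
      _ ≤ ε := by rw [← Complex.dist_eq]; exact hd

lemma key1 {U : Set ℂ} (hUo : IsOpen U) (hsub : Metric.closedBall (0:ℂ) 1 ⊆ U)
    {h : ℂ → ℂ} (hh : DifferentiableOn ℂ h U) :
    posLog (‖h 0‖) ≤ (1/(2*Real.pi)) *
      ∫ θ in (0:ℝ)..(2*Real.pi), posLog (‖h (Complex.exp (θ * Complex.I))‖) := by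
  have hπ : (0:ℝ) < 2 * Real.pi := Real.two_pi_pos
  have hsphere : ∀ z : ℂ, z ∈ Metric.sphere (0:ℂ) 1 → ContinuousAt h z := fun z hz =>
    (hh.continuousOn.continuousAt (hUo.mem_nhds (hsub (Metric.sphere_subset_closedBall hz))))
  have hcont : Continuous fun θ : ℝ => posLog (‖h (Complex.exp (θ * Complex.I))‖) := by
    rw [continuous_iff_continuousAt]
    intro θ
    have h1 : ContinuousAt (fun θ : ℝ => Complex.exp (θ * Complex.I)) θ :=
      (Complex.continuous_exp.comp (continuous_ofReal.mul continuous_const)).continuousAt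
    have h2 : Complex.exp ((θ:ℂ) * Complex.I) ∈ Metric.sphere (0:ℂ) 1 := by
      rw [mem_sphere_zero_iff_norm, Complex.norm_exp]
      simp
    have h3 : ContinuousAt (fun θ : ℝ => h (Complex.exp (θ * Complex.I))) θ :=
      ContinuousAt.comp (hsphere _ h2) h1
    have h4 : ContinuousAt (fun θ : ℝ => ‖h (Complex.exp (θ * Complex.I))‖) θ :=
      ContinuousAt.comp continuous_norm.continuousAt h3
    exact ContinuousAt.comp continuous_posLog.continuousAt h4
  have hint : IntervalIntegrable
      (fun θ : ℝ => posLog (‖h (Complex.exp (θ * Complex.I))‖))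
      MeasureTheory.volume 0 (2*Real.pi) := hcont.intervalIntegrable _ _
  rcases le_or_gt (‖h 0‖) 1 with h0 | h0
  · rw [posLog_of_le_one (norm_nonneg _) h0]
    apply mul_nonneg (by positivity)
    apply intervalIntegral.integral_nonneg hπ.le
    intro θ _
    exact posLog_nonneg _
  · rw [posLog_of_one_le h0.le]
    apply le_of_forall_pos_le_add
    intro ε hε
    obtain ⟨Q, hQdiff, hQapprox⟩ := trig_approx (fun z => posLog (‖h z‖))
      (fun z hz => continuous_posLog.continuousAt.comp
        (continuous_norm.continuousAt.comp (hsphere z hz))) (ε/3) (by positivity)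
    set ψ : ℂ → ℂ := fun z => h z * Complex.exp (-(Q z)) with hψdef
    have hψdiff : DifferentiableOn ℂ ψ U :=
      hh.mul ((Complex.differentiable_exp.comp hQdiff.neg).differentiableOn)
    have hψcl : DiffContOnCl ℂ ψ (Metric.ball (0:ℂ) 1) := by
      apply DifferentiableOn.diffContOnCl
      rw [closure_ball (0:ℂ) one_ne_zero]
      exact hψdiff.mono hsub
    have hfront : ∀ z ∈ frontier (Metric.ball (0:ℂ) 1), ‖ψ z‖ ≤ Real.exp (ε/3) := by
      intro z hz
      rw [frontier_ball (0:ℂ) one_ne_zero] at hz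
      have habs1 : ‖z‖ = 1 := by
        rw [mem_sphere_zero_iff_norm] at hz; exact hz
      have hzexp : z = Complex.exp ((Complex.arg z : ℂ) * Complex.I) := by
        conv_lhs => rw [← Complex.norm_mul_exp_arg_mul_I z]
        rw [habs1]
        simp
      have happ := hQapprox (Complex.arg z)
      rw [← hzexp] at happ
      have hle1 : ‖h z‖ ≤ Real.exp (posLog (‖h z‖)) :=
        le_exp_posLog (norm_nonneg _)
      have hle2 : -(Q z).re ≤ -posLog (‖h z‖) + ε/3 := by
        have := abs_le.mp happ
        linarith [this.1]
      calc ‖ψ z‖ = ‖h z‖ * Real.exp (-(Q z).re) := by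
            rw [hψdef]
            simp only [norm_mul, Complex.norm_exp, Complex.neg_re]
        _ ≤ Real.exp (posLog (‖h z‖)) * Real.exp (-posLog (‖h z‖) + ε/3) := by
            apply mul_le_mul hle1 (Real.exp_le_exp.mpr hle2) (Real.exp_nonneg _) (Real.exp_nonneg _)
        _ = Real.exp (ε/3) := by
            rw [← Real.exp_add]; ring_nf
    have hmax : ‖ψ 0‖ ≤ Real.exp (ε/3) := by
      apply Complex.norm_le_of_forall_mem_frontier_norm_le Metric.isBounded_ball hψcl hfront
      rw [closure_ball (0:ℂ) one_ne_zero]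
      exact Metric.mem_closedBall_self zero_le_one
    have hlog0 : Real.log (‖h 0‖) ≤ (Q 0).re + ε/3 := by
      have h1 : ‖h 0‖ * Real.exp (-(Q 0).re) ≤ Real.exp (ε/3) := by
        calc ‖h 0‖ * Real.exp (-(Q 0).re) = ‖ψ 0‖ := by
              rw [hψdef]; simp only [norm_mul, Complex.norm_exp, Complex.neg_re]
          _ ≤ Real.exp (ε/3) := hmax
      have h2 : ‖h 0‖ ≤ Real.exp (ε/3 + (Q 0).re) := by
        have hpos : (0:ℝ) < Real.exp (-(Q 0).re) := Real.exp_pos _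
        rw [Real.exp_add]
        calc ‖h 0‖ = ‖h 0‖ * Real.exp (-(Q 0).re) * Real.exp ((Q 0).re) := by
              rw [mul_assoc, ← Real.exp_add]; simp
          _ ≤ Real.exp (ε/3) * Real.exp ((Q 0).re) :=
              mul_le_mul_of_nonneg_right h1 (Real.exp_nonneg _)
      have := (Real.log_le_iff_le_exp (by linarith : (0:ℝ) < ‖h 0‖)).mpr h2
      linarith
    have hQre : (Q 0).re ≤ (1/(2*Real.pi)) *
        (∫ θ in (0:ℝ)..(2*Real.pi), posLog (‖h (Complex.exp (θ * Complex.I))‖)) + ε/3 := by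
      rw [re_meanvalue Q hQdiff]
      have hmono : (∫ θ in (0:ℝ)..(2*Real.pi), (Q (Complex.exp (θ * Complex.I))).re) ≤
          ∫ θ in (0:ℝ)..(2*Real.pi),
            (posLog (‖h (Complex.exp (θ * Complex.I))‖) + ε/3) := by
        apply intervalIntegral.integral_mono_on hπ.le
        · apply Continuous.intervalIntegrable
          exact Complex.continuous_re.comp (hQdiff.continuous.comp
            (Complex.continuous_exp.comp (continuous_ofReal.mul continuous_const)))
        · exact (hcont.add continuous_const).intervalIntegrable _ _
        · intro θ _
          have := abs_le.mp (hQapprox θ)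
          linarith [this.2]
      have heq : (∫ θ in (0:ℝ)..(2*Real.pi),
          (posLog (‖h (Complex.exp (θ * Complex.I))‖) + ε/3))
          = (∫ θ in (0:ℝ)..(2*Real.pi),
              posLog (‖h (Complex.exp (θ * Complex.I))‖)) + (2*Real.pi) * (ε/3) := by
        rw [intervalIntegral.integral_add hint (intervalIntegrable_const)]
        simp [intervalIntegral.integral_const]
        ring
      calc (1/(2*Real.pi)) * ∫ θ in (0:ℝ)..(2*Real.pi), (Q (Complex.exp (θ * Complex.I))).re
          ≤ (1/(2*Real.pi)) * ((∫ θ in (0:ℝ)..(2*Real.pi),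
              posLog (‖h (Complex.exp (θ * Complex.I))‖)) + (2*Real.pi) * (ε/3)) := by
            apply mul_le_mul_of_nonneg_left _ (by positivity)
            rw [← heq]; exact hmono
        _ = (1/(2*Real.pi)) * (∫ θ in (0:ℝ)..(2*Real.pi),
              posLog (‖h (Complex.exp (θ * Complex.I))‖)) + ε/3 := by
            rw [mul_add, one_div, inv_mul_cancel_left₀ hπ.ne']
    linarith

lemma posLog_max_one (B : ℝ) (hB : 0 ≤ B) : posLog (max 1 B) = posLog B := by
  rcases le_or_gt B 1 with h | h
  · rw [max_eq_left h, posLog_of_le_one hB h, posLog_of_le_one zero_le_one le_rfl]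
  · rw [max_eq_right h.le]


lemma step_est {d : ℕ} (hd : 2 ≤ d) (co : ℕ → ℂ) (z : ℂ)
    (s : ℝ) (hs : s = ∑ j ∈ Finset.range (d-1), ‖co j‖) :
    |posLog (‖z^d + ∑ j ∈ Finset.range (d-1), co j * z^j‖)
      - (d : ℝ) * posLog (‖z‖)| ≤ (d : ℝ) * Real.log (2*(1+s)) := by
  have hs0 : 0 ≤ s := by
    rw [hs]; exact Finset.sum_nonneg fun j _ => norm_nonneg _
  set B := ‖z‖ with hB
  have hB0 : 0 ≤ B := norm_nonneg z
  set m := max 1 B with hm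
  have hm1 : 1 ≤ m := le_max_left _ _
  have hm0 : 0 < m := lt_of_lt_of_le one_pos hm1
  set A := ‖z^d + ∑ j ∈ Finset.range (d-1), co j * z^j‖ with hA
  have hA0 : 0 ≤ A := norm_nonneg _
  have hlog2 : (0:ℝ) < Real.log (2*(1+s)) := by
    apply Real.log_pos; nlinarith
  have hM0 : 0 ≤ (d:ℝ) * Real.log (2*(1+s)) := by positivity
  have hcast : (1:ℝ) ≤ (d:ℝ) := by exact_mod_cast Nat.one_le_of_lt hd
  -- upper bound on A
  have hsum_le : ‖∑ j ∈ Finset.range (d-1), co j * z^j‖ ≤ s * m^(d-2) := by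
    calc ‖∑ j ∈ Finset.range (d-1), co j * z^j‖
        ≤ ∑ j ∈ Finset.range (d-1), ‖co j * z^j‖ :=
          norm_sum_le _ _
      _ ≤ ∑ j ∈ Finset.range (d-1), ‖co j‖ * m^(d-2) := by
          apply Finset.sum_le_sum
          intro j hj
          rw [norm_mul, norm_pow]
          apply mul_le_mul_of_nonneg_left _ (norm_nonneg _)
          calc B^j ≤ m^j := pow_le_pow_left₀ hB0 (le_max_right _ _) j
            _ ≤ m^(d-2) := pow_le_pow_right₀ hm1 (by
                have := Finset.mem_range.mp hj; omega)
      _ = s * m^(d-2) := by rw [hs, Finset.sum_mul]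
  have hupper : posLog A ≤ Real.log (1+s) + (d:ℝ) * posLog B := by
    have h1 : A ≤ (1+s) * m^d := by
      calc A ≤ ‖z^d‖ + ‖∑ j ∈ Finset.range (d-1), co j * z^j‖ :=
            norm_add_le _ _
        _ ≤ m^d + s * m^(d-2) := by
            apply add_le_add _ hsum_le
            rw [norm_pow]
            exact pow_le_pow_left₀ hB0 (le_max_right _ _) d
        _ ≤ m^d + s * m^d := by
            have : m^(d-2) ≤ m^d := pow_le_pow_right₀ hm1 (by omega)
            nlinarith
        _ = (1+s) * m^d := by ring
    calc posLog A ≤ posLog ((1+s) * m^d) := posLog_mono hA0 h1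
      _ ≤ posLog (1+s) + posLog (m^d) := posLog_mul_le (by linarith) (by positivity)
      _ = Real.log (1+s) + (d:ℝ) * posLog B := by
          rw [posLog_of_one_le (by linarith), posLog_pow d hm0.le, posLog_max_one B hB0]
  have hlog1s : Real.log (1+s) ≤ (d:ℝ) * Real.log (2*(1+s)) := by
    have h1 : Real.log (1+s) ≤ Real.log (2*(1+s)) := Real.log_le_log (by linarith) (by linarith)
    nlinarith
  rw [abs_le]
  constructor
  · -- lower bound : -(M) ≤ posLog A - d posLog B
    rcases le_or_gt B (2*(1+s)) with hcase | hcase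
    · have h1 : (d:ℝ) * posLog B ≤ (d:ℝ) * Real.log (2*(1+s)) := by
        apply mul_le_mul_of_nonneg_left _ (by positivity)
        calc posLog B ≤ posLog (2*(1+s)) := posLog_mono hB0 hcase
          _ = Real.log (2*(1+s)) := posLog_of_one_le (by linarith)
      linarith [posLog_nonneg A]
    · have hB1 : (1:ℝ) < B := by linarith
      have hBsq : 2 * s ≤ B^2 := by nlinarith
      have hsum_le' : ‖∑ j ∈ Finset.range (d-1), co j * z^j‖ ≤ s * B^(d-2) := by
        rw [hm, max_eq_right (by linarith : (1:ℝ) ≤ B)] at hsum_le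
        exact hsum_le
      have hAlow : B^d / 2 ≤ A := by
        have htri : B^d ≤ A + s * B^(d-2) := by
          have h2 := norm_add_le (z^d + ∑ j ∈ Finset.range (d-1), co j * z^j)
            (-(∑ j ∈ Finset.range (d-1), co j * z^j))
          simp only [add_neg_cancel_right, norm_neg] at h2
          calc B^d = ‖z^d‖ := by rw [norm_pow]
            _ ≤ A + ‖∑ j ∈ Finset.range (d-1), co j * z^j‖ := h2
            _ ≤ A + s * B^(d-2) := by linarith [hsum_le']
        have hBd : B^d = B^(d-2) * B^2 := by
          rw [← pow_add]; congr 1; omega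
        have hBd2 : 0 ≤ B^(d-2) := by positivity
        nlinarith
      have hA1 : 1 < A := by
        have hB2 : (2:ℝ) < B := by linarith
        have h2d : (4:ℝ) < B^d := by
          calc (4:ℝ) < B^2 := by nlinarith
            _ ≤ B^d := pow_le_pow_right₀ (by linarith) hd
        linarith
      have hlow : (d:ℝ) * Real.log B - Real.log 2 ≤ posLog A := by
        rw [posLog_of_one_le hA1.le]
        calc (d:ℝ) * Real.log B - Real.log 2 = Real.log (B^d / 2) := by
              rw [Real.log_div (by positivity) two_ne_zero, Real.log_pow]
          _ ≤ Real.log A := Real.log_le_log (by positivity) hAlow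
      have hplB : posLog B = Real.log B := posLog_of_one_le hB1.le
      have hlog2' : Real.log 2 ≤ (d:ℝ) * Real.log (2*(1+s)) := by
        have : Real.log 2 ≤ Real.log (2*(1+s)) := Real.log_le_log two_pos (by nlinarith)
        nlinarith
      rw [hplB]
      linarith
  · linarith

lemma keyr {r : ℝ} (hr : 0 < r) {U : Set ℂ} (hUo : IsOpen U)
    (hsub : Metric.closedBall (0:ℂ) r ⊆ U) {h : ℂ → ℂ} (hh : DifferentiableOn ℂ h U) :
    posLog (‖h 0‖) ≤ (1/(2*Real.pi)) *
      ∫ θ in (0:ℝ)..(2*Real.pi),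
        posLog (‖h ((r:ℂ) * Complex.exp (θ * Complex.I))‖) := by
  have hmul : Continuous fun w : ℂ => (r:ℂ) * w := continuous_const.mul continuous_id
  have h1 := key1 (U := (fun w : ℂ => (r:ℂ) * w) ⁻¹' U) (hUo.preimage hmul)
    (fun w hw => by
      have : ‖w‖ ≤ 1 := mem_closedBall_zero_iff.mp hw
      apply hsub
      rw [Metric.mem_closedBall, dist_zero_right, norm_mul, Complex.norm_real,
        Real.norm_eq_abs, abs_of_pos hr]
      nlinarith [norm_nonneg w])
    (h := fun w => h ((r:ℂ) * w))
    (hh.comp ((differentiable_const _).mul differentiable_id).differentiableOn (fun w hw => hw))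
  simpa using h1

end GreenAux

open Complex in
/-- For a holomorphic family `(f_λ)` of monic centered polynomials of degree `d ≥ 2`
(coefficients `c_j(λ)` holomorphic on an open subset `Λ` of a complex Banach space, no
`z^{d-1}` term) and a holomorphic marked point `λ ↦ a(λ)`, the function
`λ ↦ G_{f_λ}(a(λ))` (where `G_{f_λ}(z) = lim dⁿ⁻¹ log⁺ |f_λⁿ(z)|` is the dynamical Green
function) is continuous and plurisubharmonic on `Λ` (sub-mean value inequality on every
complex disk contained in `Λ`). -/
theorem green_of_marked_point_continuous_psh
    {E : Type*} [NormedAddCommGroup E] [NormedSpace ℂ E]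
    (Λ : Set E) (hΛ : IsOpen Λ) (d : ℕ) (hd : 2 ≤ d)
    (c : E → ℕ → ℂ) (hc : ∀ j : ℕ, j < d - 1 → AnalyticOn ℂ (fun lam => c lam j) Λ)
    (f : E → ℂ → ℂ)
    (hf : ∀ lam : E, ∀ z : ℂ,
      f lam z = z ^ d + ∑ j ∈ Finset.range (d - 1), c lam j * z ^ j)
    (a : E → ℂ) (ha : AnalyticOn ℂ a Λ)
    (G : E → ℝ)
    (hG : ∀ lam ∈ Λ, Tendsto
      (fun n : ℕ => (1 / (d : ℝ) ^ n) * posLog (‖(f lam)^[n] (a lam)‖))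
      atTop (nhds (G lam))) :
    ContinuousOn G Λ ∧
      ∀ lam ∈ Λ, ∀ v : E, ∀ r : ℝ, 0 < r →
        (∀ w : ℂ, ‖w‖ ≤ r → lam + w • v ∈ Λ) →
        G lam ≤ (1 / (2 * Real.pi)) *
          ∫ θ in (0:ℝ)..(2 * Real.pi), G (lam + ((r : ℂ) * Complex.exp (θ * Complex.I)) • v) := by
  have hd0 : (0:ℝ) < (d:ℝ) := by positivity
  have hd1 : (1:ℝ) ≤ (d:ℝ) := by exact_mod_cast Nat.one_le_of_lt hd
  have hd2 : (2:ℝ) ≤ (d:ℝ) := by exact_mod_cast hd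
  have hπ : (0:ℝ) < 2 * Real.pi := Real.two_pi_pos
  set g : ℕ → E → ℝ :=
    fun n lam => (1 / (d : ℝ) ^ n) * posLog (‖(f lam)^[n] (a lam)‖) with hgdef
  set S : E → ℝ := fun lam => ∑ j ∈ Finset.range (d-1), ‖c lam j‖ with hSdef
  set M : E → ℝ := fun lam => (d:ℝ) * Real.log (2*(1+S lam)) with hMdef
  have hS0 : ∀ lam, 0 ≤ S lam := fun lam =>
    Finset.sum_nonneg fun j _ => norm_nonneg _
  have hM0 : ∀ lam, 0 ≤ M lam := by
    intro lam
    have : (0:ℝ) < Real.log (2*(1+S lam)) := Real.log_pos (by nlinarith [hS0 lam])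
    positivity
  -- differentiability of the coefficients and marked point
  have hcd : ∀ j : ℕ, j < d - 1 → DifferentiableOn ℂ (fun lam => c lam j) Λ := fun j hj =>
    ((hΛ.analyticOn_iff_analyticOnNhd.mp (hc j hj)).differentiableOn)
  have had : DifferentiableOn ℂ a Λ :=
    (hΛ.analyticOn_iff_analyticOnNhd.mp ha).differentiableOn
  -- differentiability of the iterates
  have hdiff : ∀ n : ℕ, DifferentiableOn ℂ (fun lam => (f lam)^[n] (a lam)) Λ := by
    intro n
    induction n with
    | zero => simpa using had
    | succ n ih =>
      have heq : (fun lam => (f lam)^[n+1] (a lam))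
          = fun lam => ((f lam)^[n] (a lam))^d
              + ∑ j ∈ Finset.range (d-1), c lam j * ((f lam)^[n] (a lam))^j := by
        funext lam
        rw [Function.iterate_succ_apply', hf]
      rw [heq]
      apply DifferentiableOn.add (ih.pow d)
      apply DifferentiableOn.fun_sum
      intro j hj
      exact (hcd j (Finset.mem_range.mp hj)).mul (ih.pow j)
  have hgcont : ∀ n : ℕ, ContinuousOn (g n) Λ := by
    intro n
    apply ContinuousOn.mul continuousOn_const
    exact continuous_posLog.comp_continuousOn
      (continuous_norm.comp_continuousOn (hdiff n).continuousOn)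
  have hScont : ContinuousOn S Λ := by
    apply continuousOn_finset_sum
    intro j hj
    exact continuous_norm.comp_continuousOn ((hcd j (Finset.mem_range.mp hj)).continuousOn)
  have hMcont : ContinuousOn M Λ := by
    apply ContinuousOn.mul continuousOn_const
    apply ContinuousOn.log
    · exact continuousOn_const.mul (continuousOn_const.add hScont)
    · intro x hx
      nlinarith [hS0 x]
  -- the step estimate
  have hstep : ∀ lam : E, ∀ n : ℕ,
      |g (n+1) lam - g n lam| ≤ M lam * (1/(d:ℝ))^(n+1) := by
    intro lam n
    have key := step_est hd (c lam) ((f lam)^[n] (a lam)) (S lam) rfl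
    set X := posLog (‖((f lam)^[n] (a lam))^d
      + ∑ j ∈ Finset.range (d-1), c lam j * ((f lam)^[n] (a lam))^j‖) with hX
    set Y := posLog (‖(f lam)^[n] (a lam)‖) with hY
    have hiter : (f lam)^[n+1] (a lam) = ((f lam)^[n] (a lam))^d
        + ∑ j ∈ Finset.range (d-1), c lam j * ((f lam)^[n] (a lam))^j := by
      rw [Function.iterate_succ_apply', hf]
    have hgn1 : g (n+1) lam = (1 / (d:ℝ)^(n+1)) * X := by
      rw [hgdef]; simp only; rw [hiter]
    have hgn : g n lam = (1 / (d:ℝ)^n) * Y := rfl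
    have hdiffeq : g (n+1) lam - g n lam = (1/(d:ℝ)^(n+1)) * (X - (d:ℝ) * Y) := by
      rw [hgn1, hgn]
      have : (d:ℝ)^(n+1) = (d:ℝ)^n * (d:ℝ) := by ring
      field_simp [this]
      ring
    rw [hdiffeq, abs_mul, abs_of_pos (by positivity : (0:ℝ) < 1/(d:ℝ)^(n+1)), one_div,
      ← inv_pow, inv_pow]
    calc ((d:ℝ)^(n+1))⁻¹ * |X - (d:ℝ)*Y| ≤ ((d:ℝ)^(n+1))⁻¹ * M lam := by
          apply mul_le_mul_of_nonneg_left key (by positivity)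
      _ = M lam * (1/(d:ℝ))^(n+1) := by
          rw [one_div, inv_pow]; ring
  -- telescoping estimate
  have htel : ∀ lam : E, ∀ n m : ℕ,
      |g (n+m) lam - g n lam| ≤ M lam * ((1/(d:ℝ))^n - (1/(d:ℝ))^(n+m)) := by
    intro lam n m
    induction m with
    | zero => simp
    | succ m ih =>
      have h1 := hstep lam (n+m)
      have hpow : (0:ℝ) ≤ (1/(d:ℝ))^(n+m) := by positivity
      have hdd : 2 * (1/(d:ℝ)) ≤ 1 := by
        rw [mul_one_div, div_le_one hd0]
        exact hd2
      calc |g (n+m+1) lam - g n lam|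
          ≤ |g (n+m+1) lam - g (n+m) lam| + |g (n+m) lam - g n lam| := by
            have := abs_add_le (g (n+m+1) lam - g (n+m) lam) (g (n+m) lam - g n lam)
            simpa using this
        _ ≤ M lam * (1/(d:ℝ))^(n+m+1) + M lam * ((1/(d:ℝ))^n - (1/(d:ℝ))^(n+m)) :=
            add_le_add h1 ih
        _ ≤ M lam * ((1/(d:ℝ))^n - (1/(d:ℝ))^(n+m+1)) := by
            have h2 : (1/(d:ℝ))^(n+m+1) = (1/(d:ℝ))^(n+m) * (1/(d:ℝ)) := by ring
            have h3 : 2 * (1/(d:ℝ))^(n+m+1) ≤ (1/(d:ℝ))^(n+m) := by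
              rw [h2]
              nlinarith [hpow, hdd]
            nlinarith [hM0 lam]
  -- limit estimate
  have hGest : ∀ lam ∈ Λ, ∀ n : ℕ, |G lam - g n lam| ≤ M lam * (1/(d:ℝ))^n := by
    intro lam hlam n
    have hnm : Tendsto (fun m : ℕ => n + m) atTop atTop :=
      tendsto_atTop_mono (fun m => Nat.le_add_left m n) tendsto_id
    have h1 : Tendsto (fun m : ℕ => g (n+m) lam) atTop (nhds (G lam)) :=
      (hG lam hlam).comp hnm
    have h2 : Tendsto (fun m : ℕ => |g (n+m) lam - g n lam|) atTop
        (nhds (|G lam - g n lam|)) := ((h1.sub_const _).abs)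
    apply le_of_tendsto h2
    filter_upwards with m
    calc |g (n+m) lam - g n lam| ≤ M lam * ((1/(d:ℝ))^n - (1/(d:ℝ))^(n+m)) := htel lam n m
      _ ≤ M lam * (1/(d:ℝ))^n := by
          have : (0:ℝ) ≤ (1/(d:ℝ))^(n+m) := by positivity
          nlinarith [hM0 lam]
  have hdinv_lt : (1/(d:ℝ)) < 1 := by
    rw [div_lt_one hd0]; linarith
  have hdinv_nonneg : (0:ℝ) ≤ 1/(d:ℝ) := by positivity
  have hpowlim : Tendsto (fun n : ℕ => (1/(d:ℝ))^n) atTop (nhds 0) :=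
    tendsto_pow_atTop_nhds_zero_of_lt_one hdinv_nonneg hdinv_lt
  -- continuity
  have hGcont : ContinuousOn G Λ := by
    intro lam₀ hlam₀
    apply ContinuousAt.continuousWithinAt
    have hMc : ContinuousAt M lam₀ := hMcont.continuousAt (hΛ.mem_nhds hlam₀)
    have hev : ∀ᶠ x in nhds lam₀, M x < M lam₀ + 1 :=
      hMc.preimage_mem_nhds (Iio_mem_nhds (lt_add_one _))
    obtain ⟨δ, hδ, hball⟩ := Metric.mem_nhds_iff.mp (Filter.inter_mem hev (hΛ.mem_nhds hlam₀))
    set C := M lam₀ + 1 with hC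
    have hC0 : 0 < C := by have := hM0 lam₀; linarith
    have htu : TendstoUniformlyOn (fun n x => g n x) G atTop (Metric.ball lam₀ δ) := by
      rw [Metric.tendstoUniformlyOn_iff]
      intro ε hε
      have hlim2 : Tendsto (fun n : ℕ => C * (1/(d:ℝ))^n) atTop (nhds 0) := by
        have := hpowlim.const_mul C
        simpa using this
      filter_upwards [hlim2.eventually (gt_mem_nhds hε)] with n hn x hx
      obtain ⟨hx1, hx2⟩ := hball hx
      rw [Real.dist_eq]
      calc |G x - g n x| ≤ M x * (1/(d:ℝ))^n := hGest x hx2 n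
        _ ≤ C * (1/(d:ℝ))^n := mul_le_mul_of_nonneg_right hx1.le (by positivity)
        _ < ε := hn
    have hGball : ContinuousOn G (Metric.ball lam₀ δ) := by
      apply htu.continuousOn
      refine Filter.Eventually.frequently ?_
      filter_upwards with n
      exact (hgcont n).mono (fun x hx => (hball hx).2)
    exact hGball.continuousAt (Metric.ball_mem_nhds lam₀ hδ)
  refine ⟨hGcont, ?_⟩
  -- submean value inequality
  intro lam hlam v r hr hcirc
  set φ : ℂ → E := fun w => lam + w • v with hφdef
  have hφcont : Continuous φ := continuous_const.add (continuous_id.smul continuous_const)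
  have hφdiff : Differentiable ℂ φ :=
    (differentiable_const _).add (differentiable_id.smul_const v)
  have hUo : IsOpen (φ ⁻¹' Λ) := hΛ.preimage hφcont
  have hUsub : Metric.closedBall (0:ℂ) r ⊆ φ ⁻¹' Λ := by
    intro w hw
    apply hcirc
    have : ‖w‖ ≤ r := mem_closedBall_zero_iff.mp hw
    exact this
  have hφ0 : φ 0 = lam := by simp [hφdef]
  have hcircmem : ∀ θ : ℝ, φ ((r:ℂ) * Complex.exp (θ * Complex.I)) ∈ Λ := by
    intro θ
    apply hcirc
    rw [norm_mul, Complex.norm_exp]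
    simp [abs_of_pos hr]
  have hcircC : Continuous fun θ : ℝ => φ ((r:ℂ) * Complex.exp (θ * Complex.I)) :=
    hφcont.comp (continuous_const.mul
      (Complex.continuous_exp.comp (Complex.continuous_ofReal.mul continuous_const)))
  -- Green function composed with circle is continuous
  have hGcirc : Continuous fun θ : ℝ => G (φ ((r:ℂ) * Complex.exp (θ * Complex.I))) := by
    rw [continuous_iff_continuousAt]
    intro θ
    exact ContinuousAt.comp (hGcont.continuousAt (hΛ.mem_nhds (hcircmem θ)))
      hcircC.continuousAt
  have hMcirc : Continuous fun θ : ℝ => M (φ ((r:ℂ) * Complex.exp (θ * Complex.I))) := by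
    rw [continuous_iff_continuousAt]
    intro θ
    have h5 : ContinuousAt ((M) ∘ (fun θ : ℝ => φ ((r:ℂ) * Complex.exp (θ * Complex.I)))) θ :=
      ContinuousAt.comp (hMcont.continuousAt (hΛ.mem_nhds (hcircmem θ))) hcircC.continuousAt
    exact h5
  have hgcirc : ∀ n, Continuous fun θ : ℝ => g n (φ ((r:ℂ) * Complex.exp (θ * Complex.I))) := by
    intro n
    rw [continuous_iff_continuousAt]
    intro θ
    have h5 : ContinuousAt ((g n) ∘ (fun θ : ℝ => φ ((r:ℂ) * Complex.exp (θ * Complex.I)))) θ :=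
      ContinuousAt.comp ((hgcont n).continuousAt (hΛ.mem_nhds (hcircmem θ))) hcircC.continuousAt
    exact h5
  -- bound for M on the circle
  obtain ⟨C', hC'⟩ := IsCompact.exists_bound_of_continuousOn isCompact_uIcc
    (hMcirc.continuousOn (s := Set.uIcc 0 (2*Real.pi)))
  -- submean for each g n
  have hsub_n : ∀ n : ℕ, g n lam ≤ (1/(2*Real.pi)) *
      ∫ θ in (0:ℝ)..(2*Real.pi), g n (φ ((r:ℂ) * Complex.exp (θ * Complex.I))) := by
    intro n
    have hHdiff : DifferentiableOn ℂ (fun w => (f (φ w))^[n] (a (φ w))) (φ ⁻¹' Λ) :=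
      (hdiff n).comp hφdiff.differentiableOn (fun w hw => hw)
    have hkey := keyr hr hUo hUsub hHdiff
    rw [hφ0] at hkey
    have h1 : g n lam ≤ (1/(d:ℝ)^n) * ((1/(2*Real.pi)) *
        ∫ θ in (0:ℝ)..(2*Real.pi),
          posLog (‖(f (φ ((r:ℂ) * Complex.exp (θ * Complex.I))))^[n]
            (a (φ ((r:ℂ) * Complex.exp (θ * Complex.I))))‖)) := by
      apply mul_le_mul_of_nonneg_left hkey (by positivity)
    calc g n lam ≤ _ := h1
      _ = (1/(2*Real.pi)) * ∫ θ in (0:ℝ)..(2*Real.pi),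
            g n (φ ((r:ℂ) * Complex.exp (θ * Complex.I))) := by
          show (1/(d:ℝ)^n) * ((1/(2*Real.pi)) * ∫ θ in (0:ℝ)..(2*Real.pi),
              posLog (‖(f (φ ((r:ℂ) * Complex.exp (θ * Complex.I))))^[n]
                (a (φ ((r:ℂ) * Complex.exp (θ * Complex.I))))‖))
            = (1/(2*Real.pi)) * ∫ θ in (0:ℝ)..(2*Real.pi), (1/(d:ℝ)^n) *
              posLog (‖(f (φ ((r:ℂ) * Complex.exp (θ * Complex.I))))^[n]
                (a (φ ((r:ℂ) * Complex.exp (θ * Complex.I))))‖)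
          rw [intervalIntegral.integral_const_mul]
          ring
  -- pass to the limit
  have hRHS : ∀ n : ℕ, g n lam ≤ ((1/(2*Real.pi)) *
      ∫ θ in (0:ℝ)..(2*Real.pi), G (φ ((r:ℂ) * Complex.exp (θ * Complex.I))))
      + C' * (1/(d:ℝ))^n := by
    intro n
    have hmono : (∫ θ in (0:ℝ)..(2*Real.pi), g n (φ ((r:ℂ) * Complex.exp (θ * Complex.I))))
        ≤ ∫ θ in (0:ℝ)..(2*Real.pi),
            (G (φ ((r:ℂ) * Complex.exp (θ * Complex.I))) + C' * (1/(d:ℝ))^n) := by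
      apply intervalIntegral.integral_mono_on hπ.le
      · exact (hgcirc n).intervalIntegrable _ _
      · exact (hGcirc.add continuous_const).intervalIntegrable _ _
      · intro θ hθ
        have hmem := hcircmem θ
        have h1 := hGest _ hmem n
        have h2 : M (φ ((r:ℂ) * Complex.exp (θ * Complex.I))) ≤ C' := by
          have := hC' θ (by
            rw [Set.uIcc_of_le hπ.le]; exact hθ)
          exact (le_abs_self _).trans (by rwa [Real.norm_eq_abs] at this)
        have h3 := abs_le.mp h1
        have h4 : (0:ℝ) ≤ (1/(d:ℝ))^n := by positivity
        nlinarith [h3.1]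
    have heq : (∫ θ in (0:ℝ)..(2*Real.pi),
        (G (φ ((r:ℂ) * Complex.exp (θ * Complex.I))) + C' * (1/(d:ℝ))^n))
        = (∫ θ in (0:ℝ)..(2*Real.pi), G (φ ((r:ℂ) * Complex.exp (θ * Complex.I))))
          + (2*Real.pi) * (C' * (1/(d:ℝ))^n) := by
      rw [intervalIntegral.integral_add (hGcirc.intervalIntegrable _ _) intervalIntegrable_const]
      simp [intervalIntegral.integral_const]
      ring
    calc g n lam ≤ (1/(2*Real.pi)) *
          ∫ θ in (0:ℝ)..(2*Real.pi), g n (φ ((r:ℂ) * Complex.exp (θ * Complex.I))) := hsub_n n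
      _ ≤ (1/(2*Real.pi)) * ((∫ θ in (0:ℝ)..(2*Real.pi),
            G (φ ((r:ℂ) * Complex.exp (θ * Complex.I))))
            + (2*Real.pi) * (C' * (1/(d:ℝ))^n)) := by
          apply mul_le_mul_of_nonneg_left _ (by positivity)
          rw [← heq]; exact hmono
      _ = ((1/(2*Real.pi)) *
            ∫ θ in (0:ℝ)..(2*Real.pi), G (φ ((r:ℂ) * Complex.exp (θ * Complex.I))))
            + C' * (1/(d:ℝ))^n := by
          rw [mul_add, one_div, inv_mul_cancel_left₀ hπ.ne']
  have hlimR : Tendsto (fun n : ℕ => ((1/(2*Real.pi)) *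
      ∫ θ in (0:ℝ)..(2*Real.pi), G (φ ((r:ℂ) * Complex.exp (θ * Complex.I))))
      + C' * (1/(d:ℝ))^n) atTop (nhds ((1/(2*Real.pi)) *
      ∫ θ in (0:ℝ)..(2*Real.pi), G (φ ((r:ℂ) * Complex.exp (θ * Complex.I))))) := by
    have h2 : Tendsto (fun n : ℕ => C' * (1/(d:ℝ))^n) atTop (nhds 0) := by
      have := hpowlim.const_mul C'
      simpa using this
    have := (tendsto_const_nhds (x := (1/(2*Real.pi)) *
      ∫ θ in (0:ℝ)..(2*Real.pi), G (φ ((r:ℂ) * Complex.exp (θ * Complex.I))))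
      (f := atTop (α := ℕ))).add h2
    simpa using this
  exact le_of_tendsto_of_tendsto' (hG lam hlam) hlimR hRHS
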